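/- The arithmetic degree map deg♯ : Pic♯(Spec ℤ) → ℂ/πiℤ is a group isomorphism, where Pic♯(Spec ℤ) is the group of isomorphism classes of pairs (L, L^c) of rank-one ℤ-modules together with a logarithm LOG on the complex line L⊗ℂ ⊗ L^c⊗ℂ, and deg♯(L, L^c, LOG) = −LOG(ℓ ⊗ ℓ^c) mod πiℤ for any choice of ℤ-bases ℓ of L and ℓ^c of L^c. -/

import Mathlib

open Complex TensorProduct

/-- The subgroup `2πiℤ` of `ℂ`. -/
noncomputable def twoPiI : AddSubgroup ℂ := AddSubgroup.zmultiples (2 * Real.pi * Complex.I)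

/-- The subgroup `πiℤ` of `ℂ`. -/
noncomputable def piI : AddSubgroup ℂ := AddSubgroup.zmultiples (Real.pi * Complex.I)

abbrev CModTwoPiI := ℂ ⧸ twoPiI
abbrev CModPiI := ℂ ⧸ piI

lemma twoPiI_le_piI : twoPiI ≤ piI := by
  intro x hx
  obtain ⟨n, hn⟩ := AddSubgroup.mem_zmultiples_iff.mp hx
  refine AddSubgroup.mem_zmultiples_iff.mpr ⟨2 * n, ?_⟩
  rw [← hn]; simp only [zsmul_eq_mul]; push_cast; ring

/-- The canonical reduction `ℂ/2πiℤ → ℂ/πiℤ`. -/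
noncomputable def reduceModPiI : CModTwoPiI →+ CModPiI :=
  QuotientAddGroup.map twoPiI piI (AddMonoidHom.id ℂ) twoPiI_le_piI

/-- The complex logarithm, viewed modulo `2πiℤ`. -/
noncomputable def qlog (z : ℂ) : CModTwoPiI := QuotientAddGroup.mk (Complex.log z)

/-- A logarithm on a complex vector space. -/
def IsLogarithm {V : Type*} [AddCommGroup V] [Module ℂ V]
    (LOG : {e : V // e ≠ 0} → CModTwoPiI) : Prop :=
  ∀ (l : ℂˣ) (e : {e : V // e ≠ 0}),
    LOG ⟨(l : ℂ) • e.1, smul_ne_zero l.ne_zero e.2⟩ = qlog (l : ℂ) + LOG e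

/-- The complexification `ℂ ⊗_ℤ L` of an abelian group `L`. -/
abbrev Cxt (L : Type) [AddCommGroup L] : Type := TensorProduct ℤ ℂ L

/-- The complex line `(L ⊗ ℂ) ⊗_ℂ (L^c ⊗ ℂ)` attached to a pair of rank-one ℤ-modules. -/
abbrev Line (L Lc : Type) [AddCommGroup L] [AddCommGroup Lc] : Type :=
  TensorProduct ℂ (Cxt L) (Cxt Lc)

/-- A conjugate pair of line bundles with logarithm over `Spec ℤ`: two projective
(equivalently free) rank-one ℤ-modules `L`, `L^c` together with a logarithm on the
complex line `Lℂ ⊗ L^cℂ`. -/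
structure ConjPairZ where
  L : Type
  Lc : Type
  [grpL : AddCommGroup L]
  [grpLc : AddCommGroup Lc]
  [freeL : Module.Free ℤ L]
  [freeLc : Module.Free ℤ Lc]
  rankL : Module.finrank ℤ L = 1
  rankLc : Module.finrank ℤ Lc = 1
  LOG : {v : Line L Lc // v ≠ 0} → CModTwoPiI
  isLog : IsLogarithm LOG

attribute [instance] ConjPairZ.grpL ConjPairZ.grpLc ConjPairZ.freeL ConjPairZ.freeLc

/-- The ℂ-linear isomorphism of lines induced by ℤ-linear isomorphisms of the factors. -/
noncomputable def mapLine {L L' Lc Lc' : Type}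
    [AddCommGroup L] [AddCommGroup L'] [AddCommGroup Lc] [AddCommGroup Lc']
    (φ : L ≃ₗ[ℤ] L') (ψ : Lc ≃ₗ[ℤ] Lc') : Line L Lc ≃ₗ[ℂ] Line L' Lc' :=
  TensorProduct.congr (LinearEquiv.baseChange ℤ ℂ _ _ φ) (LinearEquiv.baseChange ℤ ℂ _ _ ψ)

/-- An isomorphism of conjugate pairs over `Spec ℤ`: ℤ-linear isomorphisms of both
underlying modules whose induced map on the complex lines preserves the logarithms. -/
structure PairIso (P Q : ConjPairZ) where
  φ : P.L ≃ₗ[ℤ] Q.L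
  ψ : P.Lc ≃ₗ[ℤ] Q.Lc
  compat : ∀ v : {v : Line P.L P.Lc // v ≠ 0},
    Q.LOG ⟨mapLine φ ψ v.1, (mapLine φ ψ).map_ne_zero_iff.mpr v.2⟩ = P.LOG v


open Module

section Aux

lemma qlog_mul {a b : ℂ} (ha : a ≠ 0) (hb : b ≠ 0) : qlog (a*b) = qlog a + qlog b := by
  have h : Complex.exp (Complex.log (a*b)) = Complex.exp (Complex.log a + Complex.log b) := by
    rw [Complex.exp_add, Complex.exp_log (mul_ne_zero ha hb), Complex.exp_log ha,
      Complex.exp_log hb]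
  obtain ⟨n, hn⟩ := Complex.exp_eq_exp_iff_exists_int.mp h
  have h2 : qlog a + qlog b = QuotientAddGroup.mk (Complex.log a + Complex.log b) := rfl
  rw [h2, qlog, QuotientAddGroup.eq_iff_sub_mem, hn]
  refine AddSubgroup.mem_zmultiples_iff.mpr ⟨n, ?_⟩
  simp only [zsmul_eq_mul]; ring

lemma qlog_one : qlog 1 = 0 := by
  simp only [qlog, Complex.log_one]; rfl

lemma qlog_neg_one : qlog (-1) = QuotientAddGroup.mk (Real.pi * Complex.I) := by
  simp only [qlog, Complex.log_neg_one]

lemma qlog_neg_one_add_qlog_neg_one : qlog (-1) + qlog (-1) = 0 := by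
  rw [qlog_neg_one]
  have h0 : (0 : CModTwoPiI) = QuotientAddGroup.mk 0 := rfl
  rw [h0, ← QuotientAddGroup.mk_add, QuotientAddGroup.eq_iff_sub_mem]
  refine AddSubgroup.mem_zmultiples_iff.mpr ⟨1, ?_⟩
  simp only [zsmul_eq_mul]; push_cast; ring

lemma reduce_mk (x : ℂ) :
    reduceModPiI (QuotientAddGroup.mk x) = (QuotientAddGroup.mk x : CModPiI) := rfl

lemma reduce_qlog_neg_one : reduceModPiI (qlog (-1)) = 0 := by
  rw [qlog_neg_one, reduce_mk]
  have h0 : (0 : CModPiI) = QuotientAddGroup.mk 0 := rfl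
  rw [h0, QuotientAddGroup.eq_iff_sub_mem]
  exact AddSubgroup.mem_zmultiples_iff.mpr ⟨1, by simp⟩

lemma isLog_smul {V : Type*} [AddCommGroup V] [Module ℂ V]
    {LOG : {e : V // e ≠ 0} → CModTwoPiI} (h : IsLogarithm LOG)
    {e v : V} (he : e ≠ 0) {μ : ℂ} (hμ : μ ≠ 0) (hv : v ≠ 0) (hve : v = μ • e) :
    LOG ⟨v, hv⟩ = qlog μ + LOG ⟨e, he⟩ := by
  have key := h (Units.mk0 μ hμ) ⟨e, he⟩
  have : (⟨v, hv⟩ : {e : V // e ≠ 0}) =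
      ⟨(Units.mk0 μ hμ : ℂ) • e, smul_ne_zero (Units.mk0 μ hμ).ne_zero he⟩ :=
    Subtype.ext hve
  rw [this, key]
  rfl

lemma basis_eq_smul {R V ι : Type*} [CommRing R] [AddCommGroup V] [Module R V] [Fintype ι]
    [Unique ι] (B : Basis ι R V) (v : V) : v = (B.repr v default) • B default := by
  conv_lhs => rw [← B.sum_repr v]
  rw [Fintype.sum_unique]

lemma basis_repr_ne_zero {R V ι : Type*} [CommRing R] [AddCommGroup V] [Module R V] [Fintype ι]
    [Unique ι] (B : Basis ι R V) {v : V} (hv : v ≠ 0) : B.repr v default ≠ 0 := by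
  intro h
  apply hv
  rw [basis_eq_smul B v, h, zero_smul]

/-- Two bases of a rank one free ℤ-module differ by a sign. -/
lemma basis_sign {L : Type} [AddCommGroup L] (b b' : Basis (Fin 1) ℤ L) :
    ∃ ε : ℤ, (ε = 1 ∨ ε = -1) ∧ b' 0 = ε • b 0 := by
  have hd : (default : Fin 1) = 0 := rfl
  set c : ℤ := b.repr (b' 0) 0 with hc
  set c' : ℤ := b'.repr (b 0) 0 with hc'
  have h1 : b' 0 = c • b 0 := by rw [hc, ← hd]; exact basis_eq_smul b (b' 0)
  have h2 : b 0 = c' • b' 0 := by rw [hc', ← hd]; exact basis_eq_smul b' (b 0)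
  have h3 : b 0 = (c' * c) • b 0 := by rw [mul_smul, ← h1, ← h2]
  have h4 : c' * c = 1 := by
    have := congrArg (fun x => b.repr x 0) h3
    simpa [Basis.repr_self] using this.symm
  have h5 : c = 1 ∨ c = -1 :=
    Int.isUnit_iff.mp (IsUnit.of_mul_eq_one (a := c) c' (by linarith [mul_comm c c']))
  exact ⟨c, h5, h1⟩

instance : Unique (Fin 1 × Fin 1) :=
  ⟨⟨(0,0)⟩, fun a => by ext <;> simp [Fin.fin_one_eq_zero]⟩

/-- The basis of the complex line attached to bases of the two factors. -/
noncomputable def lineBasis {L Lc : Type} [AddCommGroup L] [AddCommGroup Lc]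
    (b : Basis (Fin 1) ℤ L) (bc : Basis (Fin 1) ℤ Lc) :
    Basis (Fin 1 × Fin 1) ℂ (Line L Lc) :=
  Basis.tensorProduct (Algebra.TensorProduct.basis ℂ b) (Algebra.TensorProduct.basis ℂ bc)

lemma lineBasis_default {L Lc : Type} [AddCommGroup L] [AddCommGroup Lc]
    (b : Basis (Fin 1) ℤ L) (bc : Basis (Fin 1) ℤ Lc) :
    lineBasis b bc default = ((1 : ℂ) ⊗ₜ[ℤ] (b 0)) ⊗ₜ[ℂ] ((1 : ℂ) ⊗ₜ[ℤ] (bc 0)) := by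
  have hd : (default : Fin 1 × Fin 1) = (0, 0) := rfl
  rw [lineBasis, hd, Basis.tensorProduct_apply, Algebra.TensorProduct.basis_apply,
    Algebra.TensorProduct.basis_apply]

lemma lineVec_ne_zero {L Lc : Type} [AddCommGroup L] [AddCommGroup Lc]
    (b : Basis (Fin 1) ℤ L) (bc : Basis (Fin 1) ℤ Lc) :
    ((1 : ℂ) ⊗ₜ[ℤ] (b 0)) ⊗ₜ[ℂ] ((1 : ℂ) ⊗ₜ[ℤ] (bc 0)) ≠ (0 : Line L Lc) := by
  rw [← lineBasis_default b bc]
  exact (lineBasis b bc).ne_zero default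

lemma mapLine_tmul {L L' Lc Lc' : Type}
    [AddCommGroup L] [AddCommGroup L'] [AddCommGroup Lc] [AddCommGroup Lc']
    (φ : L ≃ₗ[ℤ] L') (ψ : Lc ≃ₗ[ℤ] Lc') (x : L) (y : Lc) :
    mapLine φ ψ (((1 : ℂ) ⊗ₜ[ℤ] x) ⊗ₜ[ℂ] ((1 : ℂ) ⊗ₜ[ℤ] y)) =
      ((1 : ℂ) ⊗ₜ[ℤ] (φ x)) ⊗ₜ[ℂ] ((1 : ℂ) ⊗ₜ[ℤ] (ψ y)) := by
  simp [mapLine, LinearEquiv.baseChange]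

end Aux


section Main

/-- The distinguished nonzero vector of the line attached to a choice of bases. -/
noncomputable def lvec {L Lc : Type} [AddCommGroup L] [AddCommGroup Lc]
    (b : Basis (Fin 1) ℤ L) (bc : Basis (Fin 1) ℤ Lc) : {v : Line L Lc // v ≠ 0} :=
  ⟨((1 : ℂ) ⊗ₜ[ℤ] (b 0)) ⊗ₜ[ℂ] ((1 : ℂ) ⊗ₜ[ℤ] (bc 0)), lineVec_ne_zero b bc⟩

instance (P : ConjPairZ) : Module.Finite ℤ P.L :=
  Module.finite_of_finrank_pos (by rw [P.rankL]; exact one_pos)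

instance (P : ConjPairZ) : Module.Finite ℤ P.Lc :=
  Module.finite_of_finrank_pos (by rw [P.rankLc]; exact one_pos)

/-- A choice of basis for the first module. -/
noncomputable def ConjPairZ.bL (P : ConjPairZ) : Basis (Fin 1) ℤ P.L :=
  Module.finBasisOfFinrankEq ℤ P.L P.rankL

/-- A choice of basis for the second module. -/
noncomputable def ConjPairZ.bLc (P : ConjPairZ) : Basis (Fin 1) ℤ P.Lc :=
  Module.finBasisOfFinrankEq ℤ P.Lc P.rankLc

/-- The arithmetic degree. -/
noncomputable def degS (P : ConjPairZ) : CModPiI :=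
  - reduceModPiI (P.LOG (lvec P.bL P.bLc))

lemma lvec_smul {L Lc : Type} [AddCommGroup L] [AddCommGroup Lc]
    (b b' : Basis (Fin 1) ℤ L) (bc bc' : Basis (Fin 1) ℤ Lc)
    {ε ε' : ℤ} (h1 : b' 0 = ε • b 0) (h2 : bc' 0 = ε' • bc 0) :
    (lvec b' bc').1 = (((ε : ℂ) * (ε' : ℂ)) • (lvec b bc).1 : Line L Lc) := by
  show ((1 : ℂ) ⊗ₜ[ℤ] (b' 0)) ⊗ₜ[ℂ] ((1 : ℂ) ⊗ₜ[ℤ] (bc' 0)) = _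
  rw [h1, h2, tmul_smul, tmul_smul, ← Int.cast_smul_eq_zsmul ℂ ε,
    ← Int.cast_smul_eq_zsmul ℂ ε', TensorProduct.smul_tmul_smul]
  rfl

/-- Well-definedness: the degree can be computed with any pair of bases. -/
lemma degS_eq (P : ConjPairZ) (b : Basis (Fin 1) ℤ P.L) (bc : Basis (Fin 1) ℤ P.Lc) :
    degS P = - reduceModPiI (P.LOG (lvec b bc)) := by
  obtain ⟨ε, hε, h1⟩ := basis_sign P.bL b
  obtain ⟨ε', hε', h2⟩ := basis_sign P.bLc bc
  set μ : ℂ := (ε : ℂ) * (ε' : ℂ) with hμdef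
  have hμ : μ = 1 ∨ μ = -1 := by
    rcases hε with h | h <;> rcases hε' with h' | h' <;>
      simp [hμdef, h, h']
  have hμ0 : μ ≠ 0 := by rcases hμ with h | h <;> rw [h] <;> norm_num
  have hsm : (lvec b bc).1 = μ • (lvec P.bL P.bLc).1 := lvec_smul P.bL b P.bLc bc h1 h2
  have hlog : P.LOG (lvec b bc) = qlog μ + P.LOG (lvec P.bL P.bLc) := by
    have := isLog_smul P.isLog (lvec P.bL P.bLc).2 hμ0 (lvec b bc).2 hsm
    simpa using this
  have hred : reduceModPiI (qlog μ) = 0 := by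
    rcases hμ with h | h
    · rw [h, qlog_one, map_zero]
    · rw [h]; exact reduce_qlog_neg_one
  rw [degS, hlog, map_add, hred, zero_add]

/-- If the induced map on lines respects the logarithms at one basis vector,
it does so everywhere. -/
lemma compat_extend (P Q : ConjPairZ) (φ : P.L ≃ₗ[ℤ] Q.L) (ψ : P.Lc ≃ₗ[ℤ] Q.Lc)
    (h0 : Q.LOG ⟨mapLine φ ψ (lvec P.bL P.bLc).1,
        (mapLine φ ψ).map_ne_zero_iff.mpr (lvec P.bL P.bLc).2⟩ = P.LOG (lvec P.bL P.bLc)) :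
    ∀ v : {v : Line P.L P.Lc // v ≠ 0},
      Q.LOG ⟨mapLine φ ψ v.1, (mapLine φ ψ).map_ne_zero_iff.mpr v.2⟩ = P.LOG v := by
  intro v
  set B := lineBasis P.bL P.bLc with hB
  have he : B default = (lvec P.bL P.bLc).1 := lineBasis_default P.bL P.bLc
  set μ : ℂ := B.repr v.1 default with hμdef
  have hμ0 : μ ≠ 0 := basis_repr_ne_zero B v.2
  have hv1 : v.1 = μ • (lvec P.bL P.bLc).1 := by rw [← he]; exact basis_eq_smul B v.1
  have hmap : mapLine φ ψ v.1 = μ • mapLine φ ψ (lvec P.bL P.bLc).1 := by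
    rw [hv1, map_smul]
  have hQ : Q.LOG ⟨mapLine φ ψ v.1, (mapLine φ ψ).map_ne_zero_iff.mpr v.2⟩ =
      qlog μ + Q.LOG ⟨mapLine φ ψ (lvec P.bL P.bLc).1,
        (mapLine φ ψ).map_ne_zero_iff.mpr (lvec P.bL P.bLc).2⟩ :=
    isLog_smul Q.isLog _ hμ0 _ hmap
  have hP : P.LOG v = qlog μ + P.LOG (lvec P.bL P.bLc) := by
    have := isLog_smul P.isLog (lvec P.bL P.bLc).2 hμ0 v.2 hv1
    simpa using this
  rw [hQ, h0, hP]

end Main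


section Std

noncomputable def bstd : Basis (Fin 1) ℤ ℤ := Basis.singleton (Fin 1) ℤ

noncomputable def stdLineBasis : Basis (Fin 1 × Fin 1) ℂ (Line ℤ ℤ) := lineBasis bstd bstd

noncomputable def stdLOG (c0 : ℂ) : {v : Line ℤ ℤ // v ≠ 0} → CModTwoPiI :=
  fun v => qlog (stdLineBasis.repr v.1 default) + QuotientAddGroup.mk (-c0)

lemma stdLOG_isLog (c0 : ℂ) : IsLogarithm (stdLOG c0) := by
  intro l e
  have hrepr : stdLineBasis.repr ((l : ℂ) • e.1) default =
      (l : ℂ) * stdLineBasis.repr e.1 default := by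
    rw [map_smul]; rfl
  show qlog (stdLineBasis.repr ((l : ℂ) • e.1) default) + QuotientAddGroup.mk (-c0) =
    qlog (l : ℂ) + (qlog (stdLineBasis.repr e.1 default) + QuotientAddGroup.mk (-c0))
  rw [hrepr, qlog_mul l.ne_zero (basis_repr_ne_zero _ e.2), add_assoc]

noncomputable def stdPair (c0 : ℂ) : ConjPairZ where
  L := ℤ
  Lc := ℤ
  rankL := Module.finrank_self ℤ
  rankLc := Module.finrank_self ℤ
  LOG := stdLOG c0
  isLog := stdLOG_isLog c0

lemma degS_stdPair (c0 : ℂ) : degS (stdPair c0) = QuotientAddGroup.mk c0 := by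
  rw [degS_eq (stdPair c0) bstd bstd]
  have h1 : (lvec bstd bstd).1 = stdLineBasis default := (lineBasis_default bstd bstd).symm
  have hrepr : stdLineBasis.repr (lvec bstd bstd).1 default = 1 := by
    rw [h1, Basis.repr_self, Finsupp.single_eq_same]
  have h2 : (stdPair c0).LOG (lvec bstd bstd) = QuotientAddGroup.mk (-c0) := by
    show qlog (stdLineBasis.repr (lvec bstd bstd).1 default) + QuotientAddGroup.mk (-c0) = _
    rw [hrepr, qlog_one, zero_add]
  rw [h2, reduce_mk]
  have : (QuotientAddGroup.mk (-c0) : CModPiI) = - QuotientAddGroup.mk c0 := by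
    rw [← QuotientAddGroup.mk_neg]
  rw [this, neg_neg]

end Std

/-- The arithmetic degree `deg♯ : Pic♯(Spec ℤ) → ℂ/πiℤ`,
`deg♯(L, L^c, LOG) = − LOG(ℓ ⊗ ℓ^c) mod πiℤ` for ℤ-bases `ℓ` of `L` and `ℓ^c` of `L^c`,
is a well-defined isomorphism: it is independent of the choice of bases, two conjugate
pairs have the same degree iff they are isomorphic (so `deg♯` is injective on the group
`Pic♯(Spec ℤ)` of isomorphism classes), and it is surjective onto `ℂ/πiℤ`. -/

theorem degSharp_isomorphism_of_PicSharp_SpecZ :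
    ∃ degSharp : ConjPairZ → CModPiI,
      (∀ (P : ConjPairZ) (b : Module.Basis (Fin 1) ℤ P.L) (bc : Module.Basis (Fin 1) ℤ P.Lc)
          (v : {v : Line P.L P.Lc // v ≠ 0}),
          (v : Line P.L P.Lc) = ((1 : ℂ) ⊗ₜ[ℤ] (b 0)) ⊗ₜ[ℂ] ((1 : ℂ) ⊗ₜ[ℤ] (bc 0)) →
          degSharp P = - reduceModPiI (P.LOG v)) ∧
      (∀ P Q : ConjPairZ, degSharp P = degSharp Q ↔ Nonempty (PairIso P Q)) ∧
      Function.Surjective degSharp := by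
  refine ⟨degS, ?_, ?_, ?_⟩
  · intro P b bc v hv
    have hveq : v = lvec b bc := Subtype.ext hv
    rw [hveq]
    exact degS_eq P b bc
  · intro P Q
    constructor
    · intro hPQ
      obtain ⟨x, hx⟩ := QuotientAddGroup.mk_surjective (P.LOG (lvec P.bL P.bLc))
      obtain ⟨y, hy⟩ := QuotientAddGroup.mk_surjective (Q.LOG (lvec Q.bL Q.bLc))
      have h1 : reduceModPiI (P.LOG (lvec P.bL P.bLc)) =
          reduceModPiI (Q.LOG (lvec Q.bL Q.bLc)) := by
        rw [degS, degS] at hPQ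
        exact neg_injective hPQ
      have hred : (QuotientAddGroup.mk x : CModPiI) = QuotientAddGroup.mk y := by
        rw [← reduce_mk, ← reduce_mk, hx, hy]
        exact h1
      obtain ⟨n, hn⟩ :=
        AddSubgroup.mem_zmultiples_iff.mp (QuotientAddGroup.eq_iff_sub_mem.mp hred)
      have hn' : (n : ℂ) * (Real.pi * Complex.I) = x - y := by
        simpa [zsmul_eq_mul] using hn
      set φ : P.L ≃ₗ[ℤ] Q.L := P.bL.equiv Q.bL (Equiv.refl _) with hφdef
      have hφ : φ (P.bL 0) = Q.bL 0 := by
        rw [hφdef, Basis.equiv_apply]; rfl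
      rcases Int.even_or_odd n with ⟨k, hk⟩ | ⟨k, hk⟩
      · -- even case : the two logarithms agree mod 2πi
        have hAB : P.LOG (lvec P.bL P.bLc) = Q.LOG (lvec Q.bL Q.bLc) := by
          rw [← hx, ← hy, QuotientAddGroup.eq_iff_sub_mem]
          refine AddSubgroup.mem_zmultiples_iff.mpr ⟨k, ?_⟩
          rw [hk] at hn'
          push_cast at hn'
          simp only [zsmul_eq_mul]
          linear_combination hn'
        set ψ : P.Lc ≃ₗ[ℤ] Q.Lc := P.bLc.equiv Q.bLc (Equiv.refl _) with hψdef
        have hψ : ψ (P.bLc 0) = Q.bLc 0 := by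
          rw [hψdef, Basis.equiv_apply]; rfl
        refine ⟨⟨φ, ψ, compat_extend P Q φ ψ ?_⟩⟩
        have hmap : mapLine φ ψ (lvec P.bL P.bLc).1 = (lvec Q.bL Q.bLc).1 := by
          show mapLine φ ψ (((1 : ℂ) ⊗ₜ[ℤ] (P.bL 0)) ⊗ₜ[ℂ] ((1 : ℂ) ⊗ₜ[ℤ] (P.bLc 0))) = _
          rw [mapLine_tmul, hφ, hψ]
          rfl
        have heq : (⟨mapLine φ ψ (lvec P.bL P.bLc).1,
            (mapLine φ ψ).map_ne_zero_iff.mpr (lvec P.bL P.bLc).2⟩ :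
            {v : Line Q.L Q.Lc // v ≠ 0}) = lvec Q.bL Q.bLc := Subtype.ext hmap
        rw [heq, ← hAB]
      · -- odd case : the logarithms differ by πi; twist by a sign
        have hAB : P.LOG (lvec P.bL P.bLc) = qlog (-1) + Q.LOG (lvec Q.bL Q.bLc) := by
          rw [← hx, ← hy, qlog_neg_one]
          have : (QuotientAddGroup.mk (Real.pi * Complex.I) : CModTwoPiI) +
              QuotientAddGroup.mk y = QuotientAddGroup.mk (Real.pi * Complex.I + y) := rfl
          rw [this, QuotientAddGroup.eq_iff_sub_mem]
          refine AddSubgroup.mem_zmultiples_iff.mpr ⟨k, ?_⟩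
          rw [hk] at hn'
          push_cast at hn'
          simp only [zsmul_eq_mul]
          linear_combination hn'
        set ψ : P.Lc ≃ₗ[ℤ] Q.Lc :=
          (P.bLc.equiv Q.bLc (Equiv.refl _)).trans (LinearEquiv.neg ℤ) with hψdef
        have hψ : ψ (P.bLc 0) = -(Q.bLc 0) := by
          rw [hψdef, LinearEquiv.trans_apply, Basis.equiv_apply]
          rfl
        refine ⟨⟨φ, ψ, compat_extend P Q φ ψ ?_⟩⟩
        have hmap : mapLine φ ψ (lvec P.bL P.bLc).1 = -((lvec Q.bL Q.bLc).1) := by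
          show mapLine φ ψ (((1 : ℂ) ⊗ₜ[ℤ] (P.bL 0)) ⊗ₜ[ℂ] ((1 : ℂ) ⊗ₜ[ℤ] (P.bLc 0))) = _
          rw [mapLine_tmul, hφ, hψ, tmul_neg, tmul_neg]
          rfl
        have hmap' : mapLine φ ψ (lvec P.bL P.bLc).1 = (-1 : ℂ) • (lvec Q.bL Q.bLc).1 := by
          rw [hmap]; exact (neg_one_smul ℂ _).symm
        have hQside : Q.LOG ⟨mapLine φ ψ (lvec P.bL P.bLc).1,
            (mapLine φ ψ).map_ne_zero_iff.mpr (lvec P.bL P.bLc).2⟩ =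
            qlog (-1) + Q.LOG (lvec Q.bL Q.bLc) :=
          isLog_smul Q.isLog (lvec Q.bL Q.bLc).2 (by norm_num)
            ((mapLine φ ψ).map_ne_zero_iff.mpr (lvec P.bL P.bLc).2) hmap'
        rw [hQside, ← hAB]
    · rintro ⟨I⟩
      have hbQ : degS Q = - reduceModPiI (Q.LOG (lvec (P.bL.map I.φ) (P.bLc.map I.ψ))) :=
        degS_eq Q _ _
      have hmap : mapLine I.φ I.ψ (lvec P.bL P.bLc).1 =
          (lvec (P.bL.map I.φ) (P.bLc.map I.ψ)).1 := by
        show mapLine I.φ I.ψ (((1 : ℂ) ⊗ₜ[ℤ] (P.bL 0)) ⊗ₜ[ℂ] ((1 : ℂ) ⊗ₜ[ℤ] (P.bLc 0))) = _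
        rw [mapLine_tmul]
        show _ = ((1 : ℂ) ⊗ₜ[ℤ] ((P.bL.map I.φ) 0)) ⊗ₜ[ℂ] ((1 : ℂ) ⊗ₜ[ℤ] ((P.bLc.map I.ψ) 0))
        rw [Basis.map_apply, Basis.map_apply]
      have hc := I.compat (lvec P.bL P.bLc)
      have heq : (⟨mapLine I.φ I.ψ (lvec P.bL P.bLc).1,
          (mapLine I.φ I.ψ).map_ne_zero_iff.mpr (lvec P.bL P.bLc).2⟩ :
          {v : Line Q.L Q.Lc // v ≠ 0}) = lvec (P.bL.map I.φ) (P.bLc.map I.ψ) :=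
        Subtype.ext hmap
      rw [heq] at hc
      rw [hbQ, hc]
      rfl
  · intro c
    obtain ⟨c0, rfl⟩ := QuotientAddGroup.mk_surjective c
    exact ⟨stdPair c0, degS_stdPair c0⟩
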